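/- For a finite rooted tree T, the number of prunings of T with an even number of edges minus the number of prunings with an odd number of edges is 0 if the first player wins the game on T, and 1 if the second player wins. -/

import Mathlib

/-- Finite rooted trees: a node together with the list of subtrees at its children. -/
inductive RTree where
  | node : List RTree → RTree

namespace RTree

/-- The polynomial `φ_T(q) = ∏_k (1 + q φ_{T_k}(q))` over the child subtrees. -/
noncomputable def phi : RTree → Polynomial ℤ
  | node ts => (ts.attach.map fun x => 1 + Polynomial.X * phi x.1).prod
decreasing_by simp only [RTree.node.sizeOf_spec]; exact Nat.lt_add_left 1 (List.sizeOf_lt_of_mem x.2)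


/-- `win T = true` iff the second player wins the game on `T`:
every child subtree is a first-player win. -/
def win : RTree → Bool
  | node ts => ts.attach.all fun x => !win x.1
decreasing_by simp only [RTree.node.sizeOf_spec]; exact Nat.lt_add_left 1 (List.sizeOf_lt_of_mem x.2)


/-- Number of edges of a rooted tree. -/
def numEdges : RTree → ℕ
  | node ts => (ts.attach.map fun x => numEdges x.1 + 1).sum
decreasing_by simp only [RTree.node.sizeOf_spec]; exact Nat.lt_add_left 1 (List.sizeOf_lt_of_mem x.2)


/-- The list of all prunings of a rooted tree: for each child, either drop it or keep a
pruning of its subtree.  Each choice is listed once, so multiplicities of equal subtrees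
are accounted for. -/
def prunings : RTree → List RTree
  | node ts =>
      ((ts.attach.map fun x => (none : Option RTree) :: (prunings x.1).map some).sections).map
        fun l => node l.reduceOption
decreasing_by simp only [RTree.node.sizeOf_spec]; exact Nat.lt_add_left 1 (List.sizeOf_lt_of_mem x.2)


/-- Distributivity: summing products over all sections equals product of sums. -/
lemma sections_sum_prod {α : Type*} (f : α → ℤ) : ∀ (L : List (List α)),
    (L.sections.map fun l => (l.map f).prod).sum = (L.map fun ls => (ls.map f).sum).prod
  | [] => by simp
  | l :: L => by
    simp only [List.sections, List.map_cons, List.prod_cons, ← sections_sum_prod f L]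
    rw [List.flatMap, List.map_flatten, List.sum_flatten]
    simp [List.sum_map_mul_right, Function.comp_def, List.sum_map_mul_left, mul_comm]

lemma countP_sub {α : Type*} (l : List α) (g : α → ℕ) :
    ((l.countP (fun S => g S % 2 = 0)) : ℤ) - (l.countP (fun S => g S % 2 = 1) : ℤ)
      = (l.map fun S => (-1 : ℤ) ^ g S).sum := by
  induction l with
  | nil => simp
  | cons a t ih =>
    rcases Nat.even_or_odd (g a) with h | h
    · simp only [List.countP_cons, List.map_cons, List.sum_cons, Even.neg_one_pow h,
        Nat.even_iff.1 h]
      push_cast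
      simp only [← ih]
      norm_num
      ring
    · simp only [List.countP_cons, List.map_cons, List.sum_cons, Odd.neg_one_pow h,
        Nat.odd_iff.1 h]
      push_cast
      simp only [← ih]
      norm_num
      ring

lemma pow_list_sum (l : List ℕ) : (-1 : ℤ) ^ l.sum = (l.map fun n => (-1 : ℤ) ^ n).prod := by
  induction l with
  | nil => simp
  | cons a t ih => simp [pow_add, ih]

/-- The per-child weight of an option: `0` edges for dropping, `numEdges + 1` for keeping. -/
def owt : Option RTree → ℕ
  | none => 0
  | some S => numEdges S + 1

lemma reduceOption_sum : ∀ l : List (Option RTree),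
    (l.reduceOption.map fun t => numEdges t + 1).sum = (l.map owt).sum
  | [] => by simp
  | none :: l => by
      simp [List.reduceOption_cons_of_none, reduceOption_sum l, owt]
  | some a :: l => by
      simp [List.reduceOption_cons_of_some, reduceOption_sum l, owt]

lemma numEdges_node (m : List RTree) :
    numEdges (node m) = (m.map fun t => numEdges t + 1).sum := by
  rw [numEdges]
  exact congrArg List.sum (List.attach_map_val (l := m) (f := fun t => numEdges t + 1))

lemma prod_if_zero_one {α : Type*} (p : α → Bool) : ∀ l : List α,
    (l.map fun x => if p x then (0 : ℤ) else 1).prod = if l.all fun x => !p x then 1 else 0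
  | [] => by simp
  | a :: l => by
    simp only [List.map_cons, List.prod_cons, List.all_cons, prod_if_zero_one p l]
    rcases Bool.eq_false_or_eq_true (p a) with h | h <;> simp [h]

theorem key : ∀ T : RTree,
    ((prunings T).map fun S => (-1 : ℤ) ^ numEdges S).sum = if win T then 1 else 0
  | node ts => by
    have ih : ∀ x ∈ ts,
        ((prunings x).map fun S => (-1 : ℤ) ^ numEdges S).sum = if win x then 1 else 0 :=
      fun x hx => key x
    have hfun : ∀ l : List (Option RTree),
        ((-1 : ℤ) ^ numEdges (node l.reduceOption))
          = (l.map fun o => (-1 : ℤ) ^ owt o).prod := by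
      intro l
      rw [numEdges_node, reduceOption_sum, pow_list_sum, List.map_map]
      rfl
    rw [prunings, List.map_map]
    have : ((fun S => (-1 : ℤ) ^ numEdges S) ∘ fun l : List (Option RTree) =>
        node l.reduceOption) = fun l => (l.map fun o => (-1 : ℤ) ^ owt o).prod :=
      funext fun l => hfun l
    rw [this, sections_sum_prod, List.map_map, win]
    have hmap : ((fun ls : List (Option RTree) =>
          (ls.map fun o => (-1 : ℤ) ^ owt o).sum) ∘ fun x : {x // x ∈ ts} =>
          (none : Option RTree) :: (prunings x.1).map some)
        = fun x : {x // x ∈ ts} => if win x.1 then (0 : ℤ) else 1 := by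
      funext x
      simp only [Function.comp_apply, List.map_cons, List.sum_cons, List.map_map]
      have : ((fun o => (-1 : ℤ) ^ owt o) ∘ some) = fun S => (-1 : ℤ) ^ (numEdges S + 1) := rfl
      rw [this]
      have : (fun S : RTree => (-1 : ℤ) ^ (numEdges S + 1))
          = fun S => (-1) * ((-1 : ℤ) ^ numEdges S) := by
        funext S; rw [pow_succ]; ring
      rw [this, List.sum_map_mul_left, ih x.1 x.2]
      rcases Bool.eq_false_or_eq_true (win x.1) with h | h <;> simp [h, owt]
    rw [hmap, prod_if_zero_one]
decreasing_by simp only [RTree.node.sizeOf_spec]; exact Nat.lt_add_left 1 (List.sizeOf_lt_of_mem hx)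

end RTree

/-- The number of prunings of `T` with an even number of edges minus the number with an
odd number of edges is `1` if the second player wins the game on `T` and `0` if the
first player wins. -/
theorem stmt8 (T : RTree) :
    ((RTree.prunings T).countP (fun S => RTree.numEdges S % 2 = 0) : ℤ)
      - ((RTree.prunings T).countP (fun S => RTree.numEdges S % 2 = 1) : ℤ)
      = if RTree.win T then 1 else 0 := by
  rw [RTree.countP_sub, RTree.key]
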